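/- Let ρ > 0, λ > 1/ρ, μ ≥ λρ, η ≥ 0, and let Ω : ℕ → ℝ and η̂ : ℕ → ℝ be sequences with Ω(t) ≥ 0 and 0 ≤ η̂(t) ≤ η for all t. Suppose that for all t ≥ 0, with τ(t) = λ/(t + μ): Ω(t+1) ≤ (1 − ρ·τ(t))·Ω(t) + τ(t)²·η̂(t). Then for all t ≥ 0: Ω(t) ≤ χ/(t + μ), where χ = max{ λ²η/(λρ − 1), μ·Ω(0) }. -/

import Mathlib

/-- Sequence-level contraction: if `Ω(t+1) ≤ (1 - ρτ(t))Ω(t) + τ(t)²η̂(t)` with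
`τ(t) = lam/(t+μ)`, then `Ω(t) ≤ χ/(t+μ)` where
`χ = max (lam²η/(lam·ρ - 1)) (μ·Ω(0))`. -/
theorem sequence_contraction (ρ lam μ η : ℝ) (hρ : 0 < ρ) (hlam : 1 / ρ < lam)
    (hμ : lam * ρ ≤ μ) (hη : 0 ≤ η)
    (Om ηh : ℕ → ℝ) (hOm : ∀ t, 0 ≤ Om t)
    (hηh0 : ∀ t, 0 ≤ ηh t) (hηhη : ∀ t, ηh t ≤ η)
    (hrec : ∀ t : ℕ,
      Om (t + 1) ≤ (1 - ρ * (lam / ((t : ℝ) + μ))) * Om t +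
        (lam / ((t : ℝ) + μ)) ^ 2 * ηh t) :
    ∀ t : ℕ, Om t ≤ max (lam ^ 2 * η / (lam * ρ - 1)) (μ * Om 0) / ((t : ℝ) + μ) := by
  have hlr : 1 < lam * ρ := by
    rw [div_lt_iff₀ hρ] at hlam; linarith
  have hμ1 : 1 < μ := lt_of_lt_of_le hlr hμ
  have hμ0 : 0 < μ := by linarith
  set χ := max (lam ^ 2 * η / (lam * ρ - 1)) (μ * Om 0) with hχ
  have hχ1 : lam ^ 2 * η / (lam * ρ - 1) ≤ χ := le_max_left _ _
  have hχ0 : 0 ≤ χ := le_trans (div_nonneg (mul_nonneg (sq_nonneg _) hη) (by linarith)) hχ1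
  have hkey : lam ^ 2 * η ≤ (lam * ρ - 1) * χ := by
    rw [div_le_iff₀ (by linarith : (0:ℝ) < lam * ρ - 1)] at hχ1; linarith
  intro t
  induction t with
  | zero =>
    have h0 : μ * Om 0 ≤ χ := le_max_right _ _
    rw [Nat.cast_zero, zero_add, le_div_iff₀ hμ0]
    linarith [h0]
  | succ n ih =>
    have hn0 : (0:ℝ) ≤ (n : ℝ) := Nat.cast_nonneg n
    have hs : (1:ℝ) < (n : ℝ) + μ := by linarith
    have hs0 : (0:ℝ) < (n : ℝ) + μ := by linarith
    have hslr : lam * ρ ≤ (n : ℝ) + μ := by linarith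
    set s := ((n : ℝ) + μ) with hsdef
    have hcoef : 0 ≤ 1 - ρ * (lam / s) := by
      rw [sub_nonneg, mul_div_assoc', div_le_one hs0]; linarith [hslr]
    have h1 : Om (n + 1) ≤ (1 - ρ * (lam / s)) * (χ / s) + (lam / s) ^ 2 * η := by
      calc Om (n + 1) ≤ (1 - ρ * (lam / s)) * Om n + (lam / s) ^ 2 * ηh n := hrec n
        _ ≤ (1 - ρ * (lam / s)) * (χ / s) + (lam / s) ^ 2 * η := by
            gcongr
            exact hηhη n
    have h2 : (1 - ρ * (lam / s)) * (χ / s) + (lam / s) ^ 2 * η ≤ χ / (s + 1) := by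
      have e1 : (1 - ρ * (lam / s)) * (χ / s) + (lam / s) ^ 2 * η
          = ((s - ρ * lam) * χ + lam ^ 2 * η) / s ^ 2 := by
        field_simp
      have e2 : (s - ρ * lam) * χ + lam ^ 2 * η ≤ (s - 1) * χ := by nlinarith [hkey]
      have e3 : ((s - 1) * χ) / s ^ 2 ≤ χ / (s + 1) := by
        rw [div_le_div_iff₀ (by positivity) (by linarith)]
        nlinarith [hχ0]
      calc (1 - ρ * (lam / s)) * (χ / s) + (lam / s) ^ 2 * η
          = ((s - ρ * lam) * χ + lam ^ 2 * η) / s ^ 2 := e1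
        _ ≤ ((s - 1) * χ) / s ^ 2 := by gcongr
        _ ≤ χ / (s + 1) := e3
    have hcast : ((n + 1 : ℕ) : ℝ) + μ = s + 1 := by
      push_cast; ring
    rw [hcast]
    exact le_trans h1 h2
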